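/- Given δ > 0, there exists ε_0 > 0 such that for all 0 < ε < ε_0 the function F(A) = S_1(A^{−1}) − ε S_n(A^{−1}) satisfies: for every diagonal matrix A with all eigenvalues λ_i > δ, one has F(A) > 0 and ∂_{ii}F(A) = (−S_{n−1;i}(A) + ε)/(λ_i S_n(A)) < 0 for every i. -/

import Mathlib

open Polynomial Finset


/-- The `k`-th elementary symmetric polynomial of `λ_1, …, λ_n`, with the convention that
`S_k = 0` for `k < 0` and `S_0 = 1`. -/
noncomputable def esymZ (n : ℕ) (k : ℤ) (lam : Fin n → ℝ) : ℝ :=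
  if 0 ≤ k then ∑ t ∈ Finset.powersetCard k.toNat Finset.univ, ∏ i ∈ t, lam i else 0

/-- `S_k(A)` for an `n × n` matrix `A`: the `k`-th elementary symmetric function of the
eigenvalues of `A`, i.e. the coefficient of `(-x)^(n-k)` in `det (A - x I)`. -/
noncomputable def SmatR (n : ℕ) (k : ℤ) (A : Matrix (Fin n) (Fin n) ℝ) : ℝ :=
  if 0 ≤ k ∧ k ≤ (n : ℤ) then (-1 : ℝ) ^ k.toNat * (Matrix.charpoly A).coeff (n - k.toNat)
  else 0

/-- `∂_{ij} G (A)`: the partial derivative of a function `G` of a matrix with respect to the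
`(i,j)` entry, at the matrix `A`. -/
noncomputable def pd (n : ℕ) (G : Matrix (Fin n) (Fin n) ℝ → ℝ) (i j : Fin n)
    (A : Matrix (Fin n) (Fin n) ℝ) : ℝ :=
  deriv (fun t : ℝ => G (A + t • Matrix.single i j 1)) 0

/-- The operator `F(A) = S_1(A⁻¹) - ε S_n(A⁻¹) = S_{n-1}(A)/S_n(A) - ε S_0(A)/S_n(A)`. -/
noncomputable def Fe (n : ℕ) (ε : ℝ) (A : Matrix (Fin n) (Fin n) ℝ) : ℝ :=
  SmatR n ((n : ℤ) - 1) A / SmatR n (n : ℤ) A - ε * (SmatR n 0 A / SmatR n (n : ℤ) A)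

lemma my_charpoly_diagonal (n : ℕ) (μ : Fin n → ℝ) :
    (Matrix.diagonal μ).charpoly = ∏ i, (X - C (μ i)) := by
  rw [Matrix.charpoly,
    show Matrix.charmatrix (Matrix.diagonal μ)
      = Matrix.diagonal (fun i => (X : ℝ[X]) - C (μ i)) from ?_,
    Matrix.det_diagonal]
  ext i j
  by_cases h : i = j
  · subst h; simp [Matrix.charmatrix_apply_eq]
  · simp [Matrix.charmatrix_apply_ne _ _ _ h, Matrix.diagonal_apply_ne _ h]

lemma SmatR_diagonal (n : ℕ) (k : ℕ) (hk : k ≤ n) (μ : Fin n → ℝ) :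
    SmatR n (k : ℤ) (Matrix.diagonal μ) = esymZ n (k : ℤ) μ := by
  rw [SmatR, if_pos ⟨Int.ofNat_nonneg k, by exact_mod_cast hk⟩, esymZ,
    if_pos (Int.ofNat_nonneg k), Int.toNat_natCast, my_charpoly_diagonal]
  have h1 : (∏ i, ((X : ℝ[X]) - C (μ i))) = ∏ i, ((X : ℝ[X]) + C ((-μ) i)) := by
    refine Finset.prod_congr rfl fun i _ => ?_
    simp [sub_eq_add_neg]
  rw [h1, Finset.prod_X_add_C_coeff _ _ (by simp [hk] : n - k ≤ #(univ : Finset (Fin n)))]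
  have h2 : #(univ : Finset (Fin n)) - (n - k) = k := by simp [Nat.sub_sub_self hk]
  rw [show #(univ : Finset (Fin n)) = n by simp] at h2 ⊢
  rw [h2]
  rw [Finset.mul_sum]
  refine Finset.sum_congr rfl fun t ht => ?_
  have hcard : #t = k := (Finset.mem_powersetCard.mp ht).2
  have hp : ∏ i ∈ t, (-μ) i = (-1 : ℝ) ^ k * ∏ i ∈ t, μ i := by
    rw [show (∏ i ∈ t, (-μ) i) = ∏ i ∈ t, (-1 : ℝ) * μ i from Finset.prod_congr rfl (by simp),
      Finset.prod_mul_distrib, Finset.prod_const, hcard]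
  rw [hp, ← mul_assoc, ← pow_add, Even.neg_one_pow ⟨k, rfl⟩, one_mul]

lemma esymZ_neg (n : ℕ) (k : ℤ) (hk : k < 0) (lam : Fin n → ℝ) : esymZ n k lam = 0 :=
  if_neg (not_le.mpr hk)

lemma esymZ_zero (n : ℕ) (lam : Fin n → ℝ) : esymZ n 0 lam = 1 := by
  simp [esymZ]

lemma esymZ_nonneg (n : ℕ) (k : ℤ) (lam : Fin n → ℝ) (h : ∀ i, 0 ≤ lam i) :
    0 ≤ esymZ n k lam := by
  rw [esymZ]
  split
  · exact Finset.sum_nonneg fun t _ => Finset.prod_nonneg fun i _ => h i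
  · exact le_refl 0

lemma esymZ_update (n : ℕ) (k : ℕ) (lam : Fin n → ℝ) (i : Fin n) (x : ℝ) :
    esymZ n (k : ℤ) (Function.update lam i x) =
      esymZ n (k : ℤ) (Function.update lam i 0)
        + x * esymZ n ((k : ℤ) - 1) (Function.update lam i 0) := by
  rcases k with _ | m
  · norm_num [esymZ_zero, esymZ_neg n (-1) (by norm_num)]
  · set u0 := Function.update lam i 0 with hu0
    set ux := Function.update lam i x with hux
    have hcast1 : ((m + 1 : ℕ) : ℤ).toNat = m + 1 := by simp
    have hcast2 : (((m + 1 : ℕ) : ℤ) - 1).toNat = m := by push_cast; simp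
    rw [esymZ, esymZ, esymZ, if_pos (by positivity), if_pos (by positivity),
      if_pos (by push_cast; omega), hcast1, hcast2]
    have split1 : ∀ f : Fin n → ℝ, ∀ r : ℕ,
        ∑ t ∈ powersetCard r univ, ∏ j ∈ t, f j
          = ∑ t ∈ (powersetCard r univ).filter (fun t => i ∈ t), ∏ j ∈ t, f j
            + ∑ t ∈ (powersetCard r univ).filter (fun t => i ∉ t), ∏ j ∈ t, f j :=
      fun f r => (Finset.sum_filter_add_sum_filter_not _ _ _).symm
    have hzero : ∀ r : ℕ,
        ∑ t ∈ (powersetCard r univ).filter (fun t => i ∈ t), ∏ j ∈ t, u0 j = 0 := by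
      intro r
      refine Finset.sum_eq_zero fun t ht => Finset.prod_eq_zero (Finset.mem_filter.mp ht).2 ?_
      simp [hu0]
    have hsame : ∀ r : ℕ,
        ∑ t ∈ (powersetCard r univ).filter (fun t => i ∉ t), ∏ j ∈ t, ux j
          = ∑ t ∈ (powersetCard r univ).filter (fun t => i ∉ t), ∏ j ∈ t, u0 j := by
      intro r
      refine Finset.sum_congr rfl fun t ht => Finset.prod_congr rfl fun j hj => ?_
      have hji : j ≠ i := fun h => ((Finset.mem_filter.mp ht).2 (h ▸ hj))
      simp [hux, hu0, Function.update_of_ne hji]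
    have hbij :
        ∑ t ∈ (powersetCard (m + 1) univ).filter (fun t => i ∈ t), ∏ j ∈ t, ux j
          = x * ∑ s ∈ (powersetCard m univ).filter (fun s => i ∉ s), ∏ j ∈ s, u0 j := by
      rw [Finset.mul_sum]
      refine Finset.sum_nbij' (fun t => t.erase i) (fun s => insert i s) ?_ ?_ ?_ ?_ ?_
      · intro t ht
        obtain ⟨ht1, ht2⟩ := Finset.mem_filter.mp ht
        obtain ⟨-, hc⟩ := Finset.mem_powersetCard.mp ht1
        refine Finset.mem_filter.mpr ⟨Finset.mem_powersetCard.mpr ⟨Finset.subset_univ _, ?_⟩,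
          Finset.notMem_erase i t⟩
        rw [Finset.card_erase_of_mem ht2, hc]; rfl
      · intro s hs
        obtain ⟨hs1, hs2⟩ := Finset.mem_filter.mp hs
        obtain ⟨-, hc⟩ := Finset.mem_powersetCard.mp hs1
        refine Finset.mem_filter.mpr ⟨Finset.mem_powersetCard.mpr ⟨Finset.subset_univ _, ?_⟩,
          Finset.mem_insert_self i s⟩
        rw [Finset.card_insert_of_notMem hs2, hc]
      · intro t ht
        exact Finset.insert_erase (Finset.mem_filter.mp ht).2
      · intro s hs
        exact Finset.erase_insert (Finset.mem_filter.mp hs).2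
      · intro t ht
        have hit : i ∈ t := (Finset.mem_filter.mp ht).2
        rw [← Finset.mul_prod_erase _ _ hit]
        have : ux i = x := by simp [hux]
        rw [this]
        congr 1
        refine Finset.prod_congr rfl fun j hj => ?_
        have hji : j ≠ i := Finset.ne_of_mem_erase hj
        simp [hux, hu0, Function.update_of_ne hji]
    calc ∑ t ∈ powersetCard (m + 1) univ, ∏ j ∈ t, ux j
        = (∑ t ∈ (powersetCard (m + 1) univ).filter (fun t => i ∈ t), ∏ j ∈ t, ux j)
          + ∑ t ∈ (powersetCard (m + 1) univ).filter (fun t => i ∉ t), ∏ j ∈ t, ux j :=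
          split1 ux (m + 1)
      _ = (x * ∑ s ∈ (powersetCard m univ).filter (fun s => i ∉ s), ∏ j ∈ s, u0 j)
          + ∑ t ∈ (powersetCard (m + 1) univ).filter (fun t => i ∉ t), ∏ j ∈ t, u0 j := by
          rw [hbij, hsame]
      _ = (∑ t ∈ powersetCard (m + 1) univ, ∏ j ∈ t, u0 j)
          + x * ∑ s ∈ powersetCard m univ, ∏ j ∈ s, u0 j := by
          rw [split1 u0 (m + 1), split1 u0 m, hzero, hzero, zero_add, zero_add, add_comm]

lemma esymZ_top (n : ℕ) (lam : Fin n → ℝ) : esymZ n (n : ℤ) lam = ∏ i, lam i := by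
  rw [esymZ, if_pos (by positivity), Int.toNat_natCast]
  have : powersetCard n (univ : Finset (Fin n)) = {univ} := by
    simpa using Finset.powersetCard_self (univ : Finset (Fin n))
  rw [this, Finset.sum_singleton]

lemma esymZ_top_update (n : ℕ) (hn : 0 < n) (lam : Fin n → ℝ) (i : Fin n) :
    esymZ n (n : ℤ) (Function.update lam i 0) = 0 := by
  rw [esymZ_top]
  exact Finset.prod_eq_zero (Finset.mem_univ i) (by simp)

lemma esymZ_ge_prod_erase (n : ℕ) (hn : 0 < n) (f : Fin n → ℝ) (hf : ∀ j, 0 ≤ f j)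
    (i : Fin n) : ∏ j ∈ univ.erase i, f j ≤ esymZ n ((n : ℤ) - 1) f := by
  obtain ⟨m, rfl⟩ : ∃ m, n = m + 1 := ⟨n - 1, (Nat.succ_pred_eq_of_pos hn).symm⟩
  have hcast : (((m + 1 : ℕ) : ℤ) - 1).toNat = m := by push_cast; simp
  rw [esymZ, if_pos (by push_cast; omega), hcast]
  have hmem : univ.erase i ∈ powersetCard m (univ : Finset (Fin (m + 1))) := by
    refine Finset.mem_powersetCard.mpr ⟨Finset.subset_univ _, ?_⟩
    rw [Finset.card_erase_of_mem (Finset.mem_univ i), Finset.card_univ]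
    simp
  exact Finset.single_le_sum (f := fun t => ∏ j ∈ t, f j)
    (fun t _ => Finset.prod_nonneg fun j _ => hf j) hmem

lemma Fe_diag (n : ℕ) (hn : 0 < n) (ε : ℝ) (μ : Fin n → ℝ) :
    Fe n ε (Matrix.diagonal μ) =
      esymZ n ((n : ℤ) - 1) μ / esymZ n (n : ℤ) μ - ε / esymZ n (n : ℤ) μ := by
  have h1 : ((n : ℤ) - 1) = ((n - 1 : ℕ) : ℤ) := by omega
  rw [Fe, h1, SmatR_diagonal n (n - 1) (Nat.sub_le n 1),
    show (0 : ℤ) = ((0 : ℕ) : ℤ) from rfl, SmatR_diagonal n 0 (Nat.zero_le n),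
    show ((n : ℕ) : ℤ) = (n : ℤ) from rfl, SmatR_diagonal n n le_rfl,
    Nat.cast_zero, esymZ_zero, ← h1]
  rw [mul_one_div]

/-- Lemma 2.4 (1): given `δ > 0`, for all sufficiently small `ε > 0`, the operator
`F(A) = S_1(A⁻¹) - ε S_n(A⁻¹)` satisfies `F(A) > 0` and
`∂_{ii} F(A) = (-S_{n-1;i}(A) + ε)/(λ_i S_n(A)) < 0` at every diagonal matrix `A` with all
eigenvalues `λ_i > δ`. -/
theorem statement4 (n : ℕ) (hn : 0 < n) (δ : ℝ) (hδ : 0 < δ) :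
    ∃ ε₀ > 0, ∀ ε : ℝ, 0 < ε → ε < ε₀ →
      ∀ lam : Fin n → ℝ, (∀ i, δ < lam i) →
        0 < Fe n ε (Matrix.diagonal lam) ∧
        ∀ i : Fin n,
          pd n (Fe n ε) i i (Matrix.diagonal lam) =
            (-(esymZ n ((n : ℤ) - 1) (Function.update lam i 0)) + ε) /
              (lam i * esymZ n (n : ℤ) lam) ∧
          pd n (Fe n ε) i i (Matrix.diagonal lam) < 0 := by
  refine ⟨δ ^ (n - 1), pow_pos hδ (n - 1), fun ε hε hεδ lam hlam => ?_⟩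
  have hpos : ∀ j, 0 < lam j := fun j => hδ.trans (hlam j)
  have hcard : ∀ i : Fin n, #((univ : Finset (Fin n)).erase i) = n - 1 := by
    intro i
    rw [Finset.card_erase_of_mem (Finset.mem_univ i), Finset.card_univ, Fintype.card_fin]
  have hprod_ge : ∀ i : Fin n, δ ^ (n - 1) ≤ ∏ j ∈ univ.erase i, lam j := by
    intro i
    calc δ ^ (n - 1) = ∏ _j ∈ univ.erase i, δ := by rw [Finset.prod_const, hcard i]
    _ ≤ ∏ j ∈ univ.erase i, lam j :=
        Finset.prod_le_prod (fun _ _ => hδ.le) (fun j _ => (hlam j).le)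
  -- P i
  set P : Fin n → ℝ := fun i => esymZ n ((n : ℤ) - 1) (Function.update lam i 0) with hPdef
  have hu0nn : ∀ i : Fin n, ∀ j, 0 ≤ Function.update lam i 0 j := by
    intro i j
    by_cases h : j = i
    · subst h; simp
    · rw [Function.update_of_ne h]; exact (hpos j).le
  have hPge : ∀ i : Fin n, δ ^ (n - 1) ≤ P i := by
    intro i
    refine (hprod_ge i).trans ?_
    have := esymZ_ge_prod_erase n hn (Function.update lam i 0) (hu0nn i) i
    refine le_trans (le_of_eq ?_) this
    exact Finset.prod_congr rfl fun j hj =>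
      (Function.update_of_ne (Finset.ne_of_mem_erase hj) 0 lam).symm
  have hPpos : ∀ i : Fin n, 0 < P i := fun i => lt_of_lt_of_le (pow_pos hδ _) (hPge i)
  have hεP : ∀ i : Fin n, ε < P i := fun i => lt_of_lt_of_le hεδ (hPge i)
  have hSnP : ∀ i : Fin n, esymZ n (n : ℤ) lam = lam i * P i := by
    intro i
    have := esymZ_update n n lam i (lam i)
    rw [Function.update_eq_self, esymZ_top_update n hn, zero_add] at this
    exact this
  have hSnpos : 0 < esymZ n (n : ℤ) lam := by
    rw [esymZ_top]; exact Finset.prod_pos fun j _ => hpos j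
  constructor
  · -- positivity
    rw [Fe_diag n hn, div_sub_div_same]
    refine div_pos ?_ hSnpos
    have i0 : Fin n := ⟨0, hn⟩
    have h1 : δ ^ (n - 1) ≤ esymZ n ((n : ℤ) - 1) lam :=
      (hprod_ge i0).trans (esymZ_ge_prod_erase n hn lam (fun j => (hpos j).le) i0)
    linarith
  · intro i
    set c := lam i with hc
    set Q : ℝ := esymZ n ((n : ℤ) - 2) (Function.update lam i 0) with hQdef
    -- matrix identity
    have hmat : ∀ t : ℝ, Matrix.diagonal lam + t • Matrix.single i i 1
        = Matrix.diagonal (Function.update lam i (c + t)) := by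
      intro t
      ext a b
      rw [Matrix.add_apply, Matrix.smul_apply]
      by_cases hab : a = b
      · subst hab
        by_cases hai : a = i
        · subst hai
          rw [Matrix.diagonal_apply_eq, Matrix.diagonal_apply_eq, Function.update_self]
          simp [Matrix.single, hc]
        · rw [Matrix.diagonal_apply_eq, Matrix.diagonal_apply_eq,
            Function.update_of_ne hai]
          have hni : ¬(i = a) := fun h => hai h.symm
          simp [Matrix.single, hni]
      · rw [Matrix.diagonal_apply_ne _ hab, Matrix.diagonal_apply_ne _ hab]
        have hni : ¬(i = a ∧ i = b) := fun h => hab (h.1.symm.trans h.2)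
        simp [Matrix.single, hni]
    -- esymZ of updated
    have hupdn : ∀ y : ℝ, esymZ n (n : ℤ) (Function.update lam i y) = y * P i := by
      intro y
      have := esymZ_update n n lam i y
      rwa [esymZ_top_update n hn, zero_add] at this
    have hupdn1 : ∀ y : ℝ,
        esymZ n ((n : ℤ) - 1) (Function.update lam i y) = P i + y * Q := by
      intro y
      have h1 : ((n : ℤ) - 1) = ((n - 1 : ℕ) : ℤ) := by omega
      have h2 : (((n - 1 : ℕ) : ℤ) - 1) = ((n : ℤ) - 2) := by omega
      have := esymZ_update n (n - 1) lam i y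
      rw [h2] at this
      rw [h1, this, ← h1, hPdef]
    -- the function
    have hfun : (fun t : ℝ => Fe n ε (Matrix.diagonal lam + t • Matrix.single i i 1))
        = fun t : ℝ => (P i + (c + t) * Q) / ((c + t) * P i) - ε / ((c + t) * P i) := by
      funext t
      rw [hmat t, Fe_diag n hn, hupdn, hupdn1]
    have hc0 : c ≠ 0 := ne_of_gt (hpos i)
    have hP0 : P i ≠ 0 := ne_of_gt (hPpos i)
    have hd0 : (c + 0) * P i ≠ 0 := by
      rw [add_zero]; exact mul_ne_zero hc0 hP0
    have hden : HasDerivAt (fun t : ℝ => (c + t) * P i) (P i) 0 := by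
      simpa using ((hasDerivAt_id (0 : ℝ)).const_add c).mul_const (P i)
    have hnum : HasDerivAt (fun t : ℝ => P i + (c + t) * Q) Q 0 := by
      simpa using (((hasDerivAt_id (0 : ℝ)).const_add c).mul_const Q).const_add (P i)
    have h1 := (hnum.div hden hd0)
    have h2 := (hasDerivAt_const (0 : ℝ) ε).div hden hd0
    have hD := (h1.sub h2)
    have hderiv := hD.deriv
    have hpd : pd n (Fe n ε) i i (Matrix.diagonal lam)
        = (Q * ((c + 0) * P i) - (P i + (c + 0) * Q) * P i) / ((c + 0) * P i) ^ 2 -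
          (0 * ((c + 0) * P i) - ε * P i) / ((c + 0) * P i) ^ 2 := by
      rw [pd, hfun]; exact hderiv
    have hval : (Q * ((c + 0) * P i) - (P i + (c + 0) * Q) * P i) / ((c + 0) * P i) ^ 2 -
          (0 * ((c + 0) * P i) - ε * P i) / ((c + 0) * P i) ^ 2
        = (-(P i) + ε) / (c * esymZ n (n : ℤ) lam) := by
      rw [hSnP i, add_zero, ← hc]
      field_simp
      ring
    rw [hpd, hval]
    refine ⟨rfl, ?_⟩
    apply div_neg_of_neg_of_pos
    · linarith [hεP i]
    · rw [hSnP i]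
      have := hPpos i
      have := hpos i
      positivity
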